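/- The limit as t → ∞ of C(⌊(5t+3+√(5(t+1)²+4))/10⌋, ⌈(5t−3−√(5(t+1)²+4))/10⌉) · √t / φ^t equals φ·√(√5/(2π)), where φ = (1+√5)/2. Equivalently, the maximum over l of C(t−l, l) is asymptotically ≈ 0.965 · φ^t / √t. -/

import Mathlib

namespace Stmt17

open Real Filter Nat Topology

lemma s5_sq : Real.sqrt 5 ^ 2 = 5 := Real.sq_sqrt (by norm_num)
lemma s5_gt : 2 < Real.sqrt 5 := by nlinarith [s5_sq, Real.sqrt_nonneg 5]
lemma s5_lt : Real.sqrt 5 < 3 := by nlinarith [s5_sq, Real.sqrt_nonneg 5]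
lemma s5_pos : 0 < Real.sqrt 5 := by linarith [s5_gt]

noncomputable def phi : ℝ := (1 + Real.sqrt 5) / 2
lemma phi_pos : 0 < phi := by unfold phi; linarith [s5_gt]
noncomputable def alpha : ℝ := (5 + Real.sqrt 5)/10
noncomputable def beta : ℝ := (5 - Real.sqrt 5)/10
noncomputable def gam : ℝ := Real.sqrt 5 / 5
lemma alpha_pos : 0 < alpha := by unfold alpha; linarith [s5_gt]
lemma beta_pos : 0 < beta := by unfold beta; linarith [s5_lt]
lemma gam_pos : 0 < gam := by unfold gam; linarith [s5_gt]
lemma alpha_gt : (7:ℝ)/10 < alpha := by unfold alpha; linarith [s5_gt]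
lemma alpha_lt : alpha < (8:ℝ)/10 := by unfold alpha; linarith [s5_lt]
lemma beta_gt : (1:ℝ)/5 < beta := by unfold beta; linarith [s5_lt]
lemma gam_gt : (2:ℝ)/5 < gam := by unfold gam; linarith [s5_gt]
lemma alpha_beta : alpha + beta = 1 := by unfold alpha beta; ring
lemma gam_alpha : gam = 2*alpha - 1 := by unfold gam alpha; ring

lemma log_alpha : Real.log alpha = Real.log phi - Real.log (Real.sqrt 5) := by
  have h : alpha = phi / Real.sqrt 5 := by
    unfold alpha phi
    rw [eq_div_iff (ne_of_gt s5_pos)]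
    nlinarith [s5_sq]
  rw [h, Real.log_div (ne_of_gt phi_pos) (ne_of_gt s5_pos)]

lemma log_beta : Real.log beta = -Real.log phi - Real.log (Real.sqrt 5) := by
  have h : beta * (Real.sqrt 5 * phi) = 1 := by
    unfold beta phi; linear_combination ((-Real.sqrt 5 + 4)/20) * s5_sq
  have h2 := Real.log_mul (ne_of_gt beta_pos) (ne_of_gt (mul_pos s5_pos phi_pos))
  have h3 := Real.log_mul (ne_of_gt s5_pos) (ne_of_gt phi_pos)
  rw [h, Real.log_one, h3] at h2
  linarith

lemma log_gam : Real.log gam = -Real.log (Real.sqrt 5) := by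
  have h : gam * Real.sqrt 5 = 1 := by
    unfold gam; linear_combination s5_sq/5
  have h2 := Real.log_mul (ne_of_gt gam_pos) (ne_of_gt s5_pos)
  rw [h, Real.log_one] at h2
  linarith

/-! ### the sequence `nt` -/

noncomputable def st (t : ℕ) : ℝ := Real.sqrt (5 * ((t : ℝ) + 1) ^ 2 + 4)

lemma st_lb (t : ℕ) : Real.sqrt 5 * ((t:ℝ) + 1) ≤ st t := by
  have h : Real.sqrt (5 * ((t:ℝ)+1)^2) ≤ st t := Real.sqrt_le_sqrt (by nlinarith)
  have hpos : (0:ℝ) ≤ Real.sqrt 5 * ((t:ℝ)+1) := by positivity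
  calc Real.sqrt 5 * ((t:ℝ)+1) = Real.sqrt (5 * ((t:ℝ)+1)^2) := by
        rw [show (5:ℝ) * ((t:ℝ)+1)^2 = (Real.sqrt 5 * ((t:ℝ)+1))^2 by nlinarith [s5_sq]]
        exact (Real.sqrt_sq hpos).symm
    _ ≤ st t := h

lemma st_ub (t : ℕ) : st t ≤ Real.sqrt 5 * ((t:ℝ) + 1) + 1 := by
  have h2 : (5:ℝ) * ((t:ℝ)+1)^2 + 4 ≤ (Real.sqrt 5 * ((t:ℝ)+1) + 1)^2 := by
    have ht : (1:ℝ) ≤ (t:ℝ)+1 := by have := Nat.cast_nonneg (α:=ℝ) t; linarith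
    nlinarith [s5_sq, s5_gt]
  have hpos : (0:ℝ) ≤ Real.sqrt 5 * ((t:ℝ)+1) + 1 := by positivity
  calc st t ≤ Real.sqrt ((Real.sqrt 5 * ((t:ℝ)+1) + 1)^2) := Real.sqrt_le_sqrt h2
    _ = _ := Real.sqrt_sq hpos

noncomputable def xt (t : ℕ) : ℝ := (5 * (t : ℝ) + 3 + st t) / 10

lemma xt_lb (t : ℕ) : alpha * t + 1/2 ≤ xt t := by
  have := st_lb t; have := s5_gt
  unfold xt alpha; nlinarith

lemma xt_ub (t : ℕ) : xt t ≤ alpha * t + 7/10 := by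
  have := st_ub t; have := s5_lt
  unfold xt alpha; nlinarith

noncomputable def nt (t : ℕ) : ℕ := ⌊xt t⌋₊

lemma xt_nonneg (t : ℕ) : 0 ≤ xt t := by
  have h : (0:ℝ) ≤ alpha * t := mul_nonneg (le_of_lt alpha_pos) (Nat.cast_nonneg t)
  linarith [xt_lb t]

lemma nt_ub (t : ℕ) : (nt t : ℝ) ≤ alpha * t + 7/10 :=
  le_trans (Nat.floor_le (xt_nonneg t)) (xt_ub t)

lemma nt_lb (t : ℕ) : alpha * t - 1/2 ≤ (nt t : ℝ) := by
  have := Nat.sub_one_lt_floor (xt t)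
  have := xt_lb t
  unfold nt; linarith

lemma cast_100 {t : ℕ} (h : 100 ≤ t) : (100:ℝ) ≤ (t:ℝ) := by exact_mod_cast h

lemma nat_le (t : ℕ) (h : 100 ≤ t) : nt t ≤ t := by
  have h1 := nt_ub t; have h2 := alpha_lt; have h3 := cast_100 h
  have : (nt t:ℝ) ≤ (t:ℝ) := by nlinarith
  exact_mod_cast this

lemma nat_ge (t : ℕ) (h : 100 ≤ t) : t + 1 ≤ 2 * nt t := by
  have h1 := nt_lb t; have h2 := alpha_gt; have h3 := cast_100 h
  have : ((t:ℝ)) + 1 ≤ 2 * (nt t:ℝ) := by nlinarith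
  exact_mod_cast this

lemma nat_lt (t : ℕ) (h : 100 ≤ t) : nt t + 1 ≤ t := by
  have h1 := nt_ub t; have h2 := alpha_lt; have h3 := cast_100 h
  have : ((nt t:ℕ):ℝ) + 1 ≤ (t:ℝ) := by nlinarith
  exact_mod_cast this

lemma ceil_eq (t : ℕ) (h : 100 ≤ t) :
    ⌈(5 * (t : ℝ) - 3 - st t) / 10⌉₊ = t - nt t := by
  have hform : (5 * (t : ℝ) - 3 - st t) / 10 = (t:ℝ) - xt t := by unfold xt; ring
  have hx := xt_nonneg t
  have hxt : xt t ≤ (t:ℝ) := by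
    have h1 := xt_ub t; have h2 := alpha_lt; have h3 := cast_100 h
    nlinarith
  have hnt := nat_le t h
  rw [hform]
  have hy : (0:ℝ) ≤ (t:ℝ) - xt t := by linarith
  have h1 : (⌈(t:ℝ) - xt t⌉₊ : ℤ) = ⌈(t:ℝ) - xt t⌉ := Int.natCast_ceil_eq_ceil hy
  have h2 : ⌈(t:ℝ) - xt t⌉ = -⌊xt t - (t:ℕ)⌋ := by
    rw [← Int.ceil_neg]; ring_nf
  have h3 : ⌊xt t - (t:ℕ)⌋ = ⌊xt t⌋ - t := Int.floor_sub_natCast (xt t) t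
  have h4 : (⌊xt t⌋₊ : ℤ) = ⌊xt t⌋ := Int.natCast_floor_eq_floor hx
  unfold nt
  omega

/-! ### Stirling pieces -/

lemma stirling_pos (j : ℕ) (hj : 1 ≤ j) : 0 < Stirling.stirlingSeq j := by
  obtain ⟨j', rfl⟩ : ∃ j', j = j' + 1 := ⟨j - 1, by omega⟩
  exact Stirling.stirlingSeq'_pos j'

lemma factorial_eq (j : ℕ) (hj : 1 ≤ j) :
    (j ! : ℝ) = Stirling.stirlingSeq j * (Real.sqrt (2*j) * ((j:ℝ)/Real.exp 1)^j) := by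
  have hj0 : (0:ℝ) < j := by exact_mod_cast hj
  have h1 : (0:ℝ) < Real.sqrt (2*j) := Real.sqrt_pos.mpr (by positivity)
  have h2 : (0:ℝ) < ((j:ℝ)/Real.exp 1)^j := by positivity
  rw [Stirling.stirlingSeq]
  field_simp

lemma pow_exp (j : ℕ) (hj : 1 ≤ j) :
    ((j:ℝ)/Real.exp 1)^j = Real.exp (j * Real.log j - j) := by
  have hj0 : (0:ℝ) < j := by exact_mod_cast hj
  have h : (0:ℝ) < (j:ℝ)/Real.exp 1 := by positivity
  rw [← Real.exp_log (pow_pos h j), Real.log_pow, Real.log_div (ne_of_gt hj0) (Real.exp_ne_zero 1),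
    Real.log_exp]
  ring_nf

lemma phi_pow (t : ℕ) : phi ^ t = Real.exp (t * Real.log phi) := by
  rw [← Real.exp_log (pow_pos phi_pos t), Real.log_pow]

lemma pointwise (p q r t : ℕ) (hp : p = q + r) (ht : t = p + q) (hq : 1 ≤ q) (hr : 1 ≤ r) :
    (p.choose q : ℝ) * Real.sqrt t / phi ^ t =
      (Stirling.stirlingSeq p / (Stirling.stirlingSeq q * Stirling.stirlingSeq r)) *
        (Real.sqrt (2*p) * Real.sqrt t / (Real.sqrt (2*q) * Real.sqrt (2*r))) *
        Real.exp ((p:ℝ) * Real.log p - q * Real.log q - r * Real.log r - t * Real.log phi) := by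
  have hp1 : 1 ≤ p := by omega
  have hqp : q ≤ p := by omega
  have hchoose : (p.choose q : ℝ) = (p ! : ℝ) / ((q ! : ℝ) * (r ! : ℝ)) := by
    rw [Nat.cast_choose ℝ hqp, show p - q = r by omega]
  have hpr : (p:ℝ) = (q:ℝ) + (r:ℝ) := by exact_mod_cast hp
  have hexp : Real.exp ((p:ℝ) * Real.log p - q * Real.log q - r * Real.log r - t * Real.log phi)
      = Real.exp ((p:ℝ) * Real.log p - p) /
        (Real.exp ((q:ℝ) * Real.log q - q) * Real.exp ((r:ℝ) * Real.log r - r) *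
          Real.exp ((t:ℝ) * Real.log phi)) := by
    rw [← Real.exp_add, ← Real.exp_add, ← Real.exp_sub]
    congr 1
    rw [hpr]; ring
  have s1 := stirling_pos p hp1
  have s2 := stirling_pos q hq
  have s3 := stirling_pos r hr
  have w1 : (0:ℝ) < Real.sqrt (2*p) := Real.sqrt_pos.mpr (by positivity)
  have w2 : (0:ℝ) < Real.sqrt (2*q) := Real.sqrt_pos.mpr (by positivity)
  have w3 : (0:ℝ) < Real.sqrt (2*r) := Real.sqrt_pos.mpr (by positivity)
  rw [hchoose, factorial_eq p hp1, factorial_eq q hq, factorial_eq r hr,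
    pow_exp p hp1, pow_exp q hq, pow_exp r hr, phi_pow, hexp]
  have e1 := Real.exp_ne_zero ((q:ℝ) * Real.log q - q)
  have e2 := Real.exp_ne_zero ((r:ℝ) * Real.log r - r)
  have e3 := Real.exp_ne_zero ((t:ℝ) * Real.log phi)
  field_simp

/-! ### log estimates -/

lemma log1p_bound (u : ℝ) (h : |u| ≤ 1/2) : |Real.log (1+u) - u| ≤ 2*u^2 := by
  have hab := abs_le.mp h
  have h1 : (0:ℝ) < 1 + u := by linarith [hab.1]
  have hup : Real.log (1+u) ≤ u := by
    have := Real.log_le_sub_one_of_pos h1; linarith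
  have hinv : (1+u) * (1+u)⁻¹ = 1 := mul_inv_cancel₀ (ne_of_gt h1)
  have hinvpos : (0:ℝ) < (1+u)⁻¹ := by positivity
  have hlow : 1 - (1+u)⁻¹ ≤ Real.log (1+u) := by
    have := Real.log_le_sub_one_of_pos hinvpos
    rw [Real.log_inv] at this; linarith
  rw [abs_le]
  constructor
  · have hv2 : (1+u)⁻¹ ≤ 2 := by nlinarith
    nlinarith [sq_nonneg u]
  · nlinarith [sq_nonneg u]

lemma term_bound (c x T : ℝ) (hT : 8 ≤ c*T) (hx : |x - c*T| ≤ 2) :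
    |x * Real.log (x/(c*T)) - (x - c*T)| ≤ 20/(c*T) := by
  set D := c*T with hD
  have hDpos : (0:ℝ) < D := by linarith
  set u := (x - D)/D with hu
  have hxD : x = D*(1+u) := by rw [hu]; field_simp; ring
  have habx := abs_le.mp hx
  have hub : |u| ≤ 2/D := by
    rw [hu, abs_div, abs_of_pos hDpos]
    gcongr
  have hu2 : |u| ≤ 1/2 := by
    refine hub.trans ?_
    rw [div_le_div_iff₀ hDpos (by norm_num)]
    linarith
  have hlog := log1p_bound u hu2
  have hxd : x / D = 1 + u := by
    rw [hu]; field_simp; ring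
  rw [hxd]
  have key : x * Real.log (1+u) - (x - D) = x * (Real.log (1+u) - u) + (x-D)^2/D := by
    have hxu : x * u = (x - D) + (x-D)^2/D := by
      rw [hu]; field_simp; ring
    nlinarith [hxu]
  rw [key]
  have habs1 : |x * (Real.log (1+u) - u)| ≤ (D+2) * (2*u^2) := by
    rw [abs_mul]
    have hx2 : |x| ≤ D + 2 := by
      rw [abs_le]; constructor <;> linarith
    exact mul_le_mul hx2 hlog (abs_nonneg _) (by linarith)
  have h4 : (x-D)^2 ≤ 4 := by nlinarith [habx.1, habx.2]
  have husq : u^2 ≤ 4/D^2 := by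
    rw [hu, div_pow]
    gcongr
  calc |x * (Real.log (1+u) - u) + (x-D)^2/D|
      ≤ |x * (Real.log (1+u) - u)| + |(x-D)^2/D| := abs_add_le _ _
    _ ≤ (D+2) * (2*u^2) + (x-D)^2/D := by
        refine add_le_add habs1 ?_
        rw [abs_of_nonneg (by positivity)]
    _ ≤ (D+2) * (2*(4/D^2)) + 4/D := by
        have hD2 : (0:ℝ) ≤ D + 2 := by linarith
        gcongr
    _ ≤ 20/D := by
        have heq : (D+2) * (2*(4/D^2)) + 4/D = (12*D + 16)/D^2 := by
          field_simp; ring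
        rw [heq, div_le_div_iff₀ (by positivity) hDpos]
        nlinarith

/-! ### the exponent -/

noncomputable def Gf (t : ℕ) : ℝ :=
  (nt t:ℝ) * Real.log (nt t) - ((t:ℝ) - nt t) * Real.log ((t:ℝ) - nt t) -
    (2*(nt t:ℝ) - t) * Real.log (2*(nt t:ℝ) - t) - t * Real.log phi

lemma G_id (N T : ℝ) (hN0 : 0 < N) (hK0 : 0 < T - N) (hM0 : 0 < 2*N - T) (hT0 : 0 < T) :
    N * Real.log N - (T - N) * Real.log (T - N) - (2*N - T) * Real.log (2*N - T) -
      T * Real.log phi =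
    (N * Real.log (N/(alpha*T)) - (N - alpha*T)) -
      ((T-N) * Real.log ((T-N)/(beta*T)) - ((T-N) - beta*T)) -
      ((2*N-T) * Real.log ((2*N-T)/(gam*T)) - ((2*N-T) - gam*T)) := by
  rw [Real.log_div (ne_of_gt hN0) (ne_of_gt (mul_pos alpha_pos hT0)),
    Real.log_div (ne_of_gt hK0) (ne_of_gt (mul_pos beta_pos hT0)),
    Real.log_div (ne_of_gt hM0) (ne_of_gt (mul_pos gam_pos hT0)),
    Real.log_mul (ne_of_gt alpha_pos) (ne_of_gt hT0),
    Real.log_mul (ne_of_gt beta_pos) (ne_of_gt hT0),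
    Real.log_mul (ne_of_gt gam_pos) (ne_of_gt hT0),
    log_alpha, log_beta, log_gam]
  unfold alpha beta gam
  ring

lemma G_bound (t : ℕ) (h : 100 ≤ t) : |Gf t| ≤ 300 / t := by
  have ht : (100:ℝ) ≤ (t:ℝ) := cast_100 h
  have ht0 : (0:ℝ) < t := by linarith
  have hNl := nt_lb t
  have hNu := nt_ub t
  have hta : (7:ℝ)/10 * t ≤ alpha * t :=
    mul_le_mul_of_nonneg_right (le_of_lt alpha_gt) (le_of_lt ht0)
  have hta' : alpha * t ≤ (8:ℝ)/10 * t :=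
    mul_le_mul_of_nonneg_right (le_of_lt alpha_lt) (le_of_lt ht0)
  have hbt : beta * t = t - alpha * t := by linear_combination (t:ℝ) * alpha_beta
  have hgt : gam * t = 2*(alpha*t) - t := by linear_combination (t:ℝ) * gam_alpha
  have hN0 : (0:ℝ) < (nt t:ℝ) := by linarith
  have hK0 : (0:ℝ) < (t:ℝ) - (nt t:ℝ) := by linarith
  have hM0 : (0:ℝ) < 2*(nt t:ℝ) - (t:ℝ) := by linarith
  have h8a : 8 ≤ alpha * t := by linarith
  have h8b : 8 ≤ beta * t := by linarith
  have h8g : 8 ≤ gam * t := by linarith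
  have habs1 : |(nt t:ℝ) - alpha*t| ≤ 2 := by rw [abs_le]; constructor <;> linarith
  have habs2 : |((t:ℝ) - (nt t:ℝ)) - beta*t| ≤ 2 := by rw [abs_le]; constructor <;> linarith
  have habs3 : |(2*(nt t:ℝ) - (t:ℝ)) - gam*t| ≤ 2 := by rw [abs_le]; constructor <;> linarith
  have T1 := term_bound alpha ((nt t:ℝ)) t h8a habs1
  have T2 := term_bound beta ((t:ℝ) - (nt t:ℝ)) t h8b habs2
  have T3 := term_bound gam (2*(nt t:ℝ) - (t:ℝ)) t h8g habs3
  have hd1 : 20/(alpha*t) ≤ 100/t := by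
    rw [div_le_div_iff₀ (by linarith) ht0]; linarith
  have hd2 : 20/(beta*t) ≤ 100/t := by
    rw [div_le_div_iff₀ (by linarith) ht0]; linarith
  have hd3 : 20/(gam*t) ≤ 100/t := by
    rw [div_le_div_iff₀ (by linarith) ht0]; linarith
  have hid : Gf t = ((nt t:ℝ) * Real.log ((nt t:ℝ)/(alpha*t)) - ((nt t:ℝ) - alpha*t)) -
      (((t:ℝ)-(nt t:ℝ)) * Real.log (((t:ℝ)-(nt t:ℝ))/(beta*t)) - (((t:ℝ)-(nt t:ℝ)) - beta*t)) -
      ((2*(nt t:ℝ)-(t:ℝ)) * Real.log ((2*(nt t:ℝ)-(t:ℝ))/(gam*t)) -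
        ((2*(nt t:ℝ)-(t:ℝ)) - gam*t)) :=
    G_id ((nt t:ℝ)) ((t:ℝ)) hN0 hK0 hM0 ht0
  rw [hid]
  have tri : ∀ a b c : ℝ, |a - b - c| ≤ |a| + |b| + |c| := fun a b c => by
    calc |a - b - c| ≤ |a - b| + |c| := abs_sub _ _
      _ ≤ |a| + |b| + |c| := by have := abs_sub a b; linarith
  refine (tri _ _ _).trans ?_
  have : (300:ℝ)/t = 100/t + 100/t + 100/t := by ring
  rw [this]
  gcongr
  · exact T1.trans hd1
  · exact T2.trans hd2
  · exact T3.trans hd3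

/-! ### limits -/

lemma ratio_tendsto : Tendsto (fun t : ℕ => (nt t:ℝ)/t) atTop (𝓝 alpha) := by
  have h0 : Tendsto (fun t : ℕ => (nt t:ℝ)/t - alpha) atTop (𝓝 0) := by
    apply squeeze_zero_norm' (a := fun t : ℕ => 1/(t:ℝ))
    · filter_upwards [eventually_ge_atTop 1] with t ht
      have ht0 : (0:ℝ) < t := by exact_mod_cast ht
      have h1 := nt_lb t; have h2 := nt_ub t
      have heq : (nt t:ℝ)/t - alpha = ((nt t:ℝ) - alpha*t)/t := by field_simp
      rw [Real.norm_eq_abs, heq, abs_div, abs_of_pos ht0]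
      gcongr
      rw [abs_le]; constructor <;> linarith
    · exact tendsto_one_div_atTop_nhds_zero_nat
  simpa using h0.add_const alpha

lemma n_top : Tendsto nt atTop atTop := by
  rw [← tendsto_natCast_atTop_iff (R := ℝ)]
  refine tendsto_atTop_mono' atTop (f₁ := fun t : ℕ => alpha * t - 1/2) ?_ ?_
  · filter_upwards with t using nt_lb t
  · apply tendsto_atTop_add_const_right
    exact (tendsto_natCast_atTop_atTop).const_mul_atTop alpha_pos

lemma q_top : Tendsto (fun t => t - nt t) atTop atTop := by
  rw [← tendsto_natCast_atTop_iff (R := ℝ)]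
  refine tendsto_atTop_mono' atTop (f₁ := fun t : ℕ => (1/5) * (t:ℝ) - 1) ?_ ?_
  · filter_upwards [eventually_ge_atTop 100] with t ht
    have ht' : (100:ℝ) ≤ (t:ℝ) := cast_100 ht
    rw [Nat.cast_sub (nat_le t ht)]
    have h2 := nt_ub t
    have hta' : alpha * t ≤ (8:ℝ)/10 * t :=
      mul_le_mul_of_nonneg_right (le_of_lt alpha_lt) (by linarith)
    linarith
  · apply tendsto_atTop_add_const_right
    exact (tendsto_natCast_atTop_atTop).const_mul_atTop (by norm_num)

lemma r_top : Tendsto (fun t => 2 * nt t - t) atTop atTop := by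
  rw [← tendsto_natCast_atTop_iff (R := ℝ)]
  refine tendsto_atTop_mono' atTop (f₁ := fun t : ℕ => (1/5) * (t:ℝ) - 1) ?_ ?_
  · filter_upwards [eventually_ge_atTop 100] with t ht
    have ht' : (100:ℝ) ≤ (t:ℝ) := cast_100 ht
    have hge := nat_ge t ht
    rw [Nat.cast_sub (by omega : t ≤ 2 * nt t)]
    have h1 := nt_lb t
    have hta : (7:ℝ)/10 * t ≤ alpha * t :=
      mul_le_mul_of_nonneg_right (le_of_lt alpha_gt) (by linarith)
    push_cast
    linarith
  · apply tendsto_atTop_add_const_right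
    exact (tendsto_natCast_atTop_atTop).const_mul_atTop (by norm_num)

lemma K_ratio : Tendsto (fun t : ℕ => ((t - nt t : ℕ):ℝ)/t) atTop (𝓝 beta) := by
  have hb : beta = 1 - alpha := by linarith [alpha_beta]
  rw [hb]
  apply Tendsto.congr' _ (tendsto_const_nhds.sub ratio_tendsto)
  filter_upwards [eventually_ge_atTop 100] with t ht
  have ht0 : (0:ℝ) < t := by have := cast_100 ht; linarith
  rw [Nat.cast_sub (nat_le t ht)]
  field_simp

lemma M_ratio : Tendsto (fun t : ℕ => ((2 * nt t - t : ℕ):ℝ)/t) atTop (𝓝 gam) := by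
  rw [gam_alpha]
  have h2 : Tendsto (fun t : ℕ => 2 * ((nt t:ℝ)/t) - 1) atTop (𝓝 (2*alpha - 1)) :=
    (ratio_tendsto.const_mul 2).sub_const 1
  apply Tendsto.congr' _ h2
  filter_upwards [eventually_ge_atTop 100] with t ht
  have ht0 : (0:ℝ) < t := by have := cast_100 ht; linarith
  have := nat_ge t ht
  rw [Nat.cast_sub (by omega : t ≤ 2 * nt t)]
  push_cast
  field_simp

lemma eq_of_sq (a b : ℝ) (ha : 0 ≤ a) (hb : 0 ≤ b) (h : a^2 = b^2) : a = b := by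
  rw [← Real.sqrt_sq ha, h, Real.sqrt_sq hb]

lemma final_id :
    Real.sqrt π/(Real.sqrt π * Real.sqrt π) *
      (Real.sqrt (2*alpha)/(Real.sqrt (2*beta) * Real.sqrt (2*gam))) * 1 =
    phi * Real.sqrt (Real.sqrt 5/(2*π)) := by
  have hπ := Real.pi_pos
  have h2a : (0:ℝ) ≤ 2*alpha := by linarith [alpha_pos]
  have h2b : (0:ℝ) < 2*beta := by linarith [beta_pos]
  have h2g : (0:ℝ) < 2*gam := by linarith [gam_pos]
  have h5 : (0:ℝ) ≤ Real.sqrt 5/(2*π) := by positivity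
  apply eq_of_sq
  · have : (0:ℝ) < Real.sqrt π := Real.sqrt_pos.mpr hπ
    positivity
  · have := phi_pos
    positivity
  simp only [mul_one, mul_pow, div_pow]
  rw [Real.sq_sqrt (le_of_lt hπ), Real.sq_sqrt h2a, Real.sq_sqrt (le_of_lt h2b),
    Real.sq_sqrt (le_of_lt h2g), Real.sq_sqrt h5]
  have hs5 : (0:ℝ) < Real.sqrt 5 := s5_pos
  have hne : (2*Real.sqrt 5 - 2) ≠ 0 := by nlinarith [s5_gt]
  have hX : 2*alpha/((2*beta)*(2*gam)) = phi^2 * Real.sqrt 5/2 := by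
    unfold alpha beta gam phi
    rw [div_eq_div_iff]
    · linear_combination ((Real.sqrt 5^3 - 3*Real.sqrt 5^2 - 4*Real.sqrt 5 - 20)/50) * s5_sq
    · nlinarith [s5_sq, s5_gt]
    · norm_num
  rw [mul_comm (2*beta) (2*gam)] at hX
  have hπ' : π ≠ 0 := ne_of_gt hπ
  field_simp at hX ⊢
  linear_combination hX



lemma exp_tendsto : Tendsto (fun t : ℕ => Real.exp (Gf t)) atTop (𝓝 1) := by
  have hG : Tendsto Gf atTop (𝓝 0) := by
    apply squeeze_zero_norm' (a := fun t : ℕ => 300/(t:ℝ))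
    · filter_upwards [eventually_ge_atTop 100] with t ht
      exact G_bound t ht
    · have := tendsto_one_div_atTop_nhds_zero_nat.const_mul (300:ℝ)
      simpa [div_eq_mul_inv] using this
  have := (Real.continuous_exp.tendsto 0).comp hG
  simpa [Function.comp_def] using this

end Stmt17

open Real Filter Topology Stmt17 in
theorem stmt17 :
    let φ : ℝ := (1 + Real.sqrt 5) / 2
    Filter.Tendsto
      (fun t : ℕ =>
        ((Nat.choose ⌊(5 * (t : ℝ) + 3 + Real.sqrt (5 * ((t : ℝ) + 1) ^ 2 + 4)) / 10⌋₊
            ⌈(5 * (t : ℝ) - 3 - Real.sqrt (5 * ((t : ℝ) + 1) ^ 2 + 4)) / 10⌉₊ : ℝ) *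
          Real.sqrt t) / φ ^ t)
      Filter.atTop (nhds (φ * Real.sqrt (Real.sqrt 5 / (2 * Real.pi)))) := by
  intro φ
  show Filter.Tendsto
      (fun t : ℕ =>
        ((Nat.choose (nt t) ⌈(5 * (t : ℝ) - 3 - st t) / 10⌉₊ : ℝ) *
          Real.sqrt t) / phi ^ t)
      Filter.atTop (nhds (phi * Real.sqrt (Real.sqrt 5 / (2 * Real.pi))))
  have hπ := Real.pi_pos
  have hsqπ : (0:ℝ) < Real.sqrt π := Real.sqrt_pos.mpr hπ
  -- component limits
  have hA : Tendsto (fun t : ℕ => Stirling.stirlingSeq (nt t) /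
      (Stirling.stirlingSeq (t - nt t) * Stirling.stirlingSeq (2 * nt t - t))) atTop
      (𝓝 (Real.sqrt π / (Real.sqrt π * Real.sqrt π))) := by
    exact (Stirling.tendsto_stirlingSeq_sqrt_pi.comp n_top).div
      ((Stirling.tendsto_stirlingSeq_sqrt_pi.comp q_top).mul
        (Stirling.tendsto_stirlingSeq_sqrt_pi.comp r_top))
      (ne_of_gt (mul_pos hsqπ hsqπ))
  have h2b : (0:ℝ) < 2*beta := by linarith [beta_pos]
  have h2g : (0:ℝ) < 2*gam := by linarith [gam_pos]
  have hne : Real.sqrt (2*beta) * Real.sqrt (2*gam) ≠ 0 :=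
    ne_of_gt (mul_pos (Real.sqrt_pos.mpr h2b) (Real.sqrt_pos.mpr h2g))
  have hB : Tendsto (fun t : ℕ => Real.sqrt (2*(nt t:ℝ)) * Real.sqrt t /
      (Real.sqrt (2*((t - nt t : ℕ):ℝ)) * Real.sqrt (2*((2 * nt t - t : ℕ):ℝ)))) atTop
      (𝓝 (Real.sqrt (2*alpha) / (Real.sqrt (2*beta) * Real.sqrt (2*gam)))) := by
    have hg : Tendsto (fun t : ℕ => Real.sqrt (2*((nt t:ℝ)/t)) /
        (Real.sqrt (2*(((t - nt t : ℕ):ℝ)/t)) * Real.sqrt (2*(((2 * nt t - t : ℕ):ℝ)/t)))) atTop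
        (𝓝 (Real.sqrt (2*alpha) / (Real.sqrt (2*beta) * Real.sqrt (2*gam)))) :=
      ((ratio_tendsto.const_mul 2).sqrt).div
        (((K_ratio.const_mul 2).sqrt).mul ((M_ratio.const_mul 2).sqrt)) hne
    apply Tendsto.congr' _ hg
    filter_upwards [eventually_ge_atTop 100] with t ht
    have ht' : (100:ℝ) ≤ (t:ℝ) := cast_100 ht
    have ht0 : (0:ℝ) < t := by linarith
    have hQ1 : 1 ≤ t - nt t := by have := nat_lt t ht; omega
    have hR1 : 1 ≤ 2 * nt t - t := by have := nat_ge t ht; omega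
    have hQ : (0:ℝ) < ((t - nt t : ℕ):ℝ) := by exact_mod_cast hQ1
    have hR : (0:ℝ) < ((2 * nt t - t : ℕ):ℝ) := by exact_mod_cast hR1
    have e1 : Real.sqrt (2*((nt t:ℝ)/t)) = Real.sqrt (2*(nt t:ℝ))/Real.sqrt t := by
      rw [show 2*((nt t:ℝ)/t) = 2*(nt t:ℝ)/(t:ℝ) by ring, Real.sqrt_div (by positivity) t]
    have e2 : Real.sqrt (2*(((t - nt t : ℕ):ℝ)/t)) =
        Real.sqrt (2*((t - nt t : ℕ):ℝ))/Real.sqrt t := by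
      rw [show 2*(((t - nt t : ℕ):ℝ)/t) = 2*((t - nt t : ℕ):ℝ)/(t:ℝ) by ring,
        Real.sqrt_div (by positivity) t]
    have e3 : Real.sqrt (2*(((2 * nt t - t : ℕ):ℝ)/t)) =
        Real.sqrt (2*((2 * nt t - t : ℕ):ℝ))/Real.sqrt t := by
      rw [show 2*(((2 * nt t - t : ℕ):ℝ)/t) = 2*((2 * nt t - t : ℕ):ℝ)/(t:ℝ) by ring,
        Real.sqrt_div (by positivity) t]
    have hst : (0:ℝ) < Real.sqrt t := Real.sqrt_pos.mpr ht0
    have hsQ : (0:ℝ) < Real.sqrt (2*((t - nt t : ℕ):ℝ)) := Real.sqrt_pos.mpr (by linarith)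
    have hsR : (0:ℝ) < Real.sqrt (2*((2 * nt t - t : ℕ):ℝ)) := Real.sqrt_pos.mpr (by linarith)
    have key : ∀ a b c T : ℝ, 0 < T → 0 < b → 0 < c →
        (a/T)/((b/T)*(c/T)) = a*T/(b*c) := by
      intro a b c T h1 h2 h3
      field_simp
    rw [e1, e2, e3, key _ _ _ _ hst hsQ hsR]
  have hE : Tendsto (fun t : ℕ => Real.exp ((nt t:ℝ) * Real.log (nt t) -
      ((t - nt t : ℕ):ℝ) * Real.log ((t - nt t : ℕ):ℝ) -
      ((2 * nt t - t : ℕ):ℝ) * Real.log ((2 * nt t - t : ℕ):ℝ) -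
      t * Real.log phi)) atTop (𝓝 1) := by
    apply Tendsto.congr' _ exp_tendsto
    filter_upwards [eventually_ge_atTop 100] with t ht
    have h1 := nat_le t ht
    have h2 := nat_ge t ht
    unfold Gf
    rw [Nat.cast_sub h1, Nat.cast_sub (by omega : t ≤ 2 * nt t)]
    push_cast
    ring_nf
  have hmain := (hA.mul hB).mul hE
  rw [final_id] at hmain
  apply Tendsto.congr' _ hmain
  filter_upwards [eventually_ge_atTop 100] with t ht
  rw [ceil_eq t ht]
  have h1 := nat_le t ht
  have h2 := nat_ge t ht
  have h3 := nat_lt t ht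
  exact (pointwise (nt t) (t - nt t) (2 * nt t - t) t (by omega) (by omega)
    (by omega) (by omega)).symm
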